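/- Let λ > 0, n ≥ 1, 0 < τ < 1/2 with λ = arccosh(1/(2τ)), and let Σ⁽ⁿ⁾ be the inverse of the n×n tridiagonal matrix with 1 on the diagonal and -τ off-diagonal. Then the diagonal entries satisfy Σᵢᵢ⁽ⁿ⁾ = (1/τ)·sinh((n+1-i)λ)·sinh(iλ)/(sinh(λ)·sinh((n+1)λ)) for 1 ≤ i ≤ n, and in particular Σᵢᵢ⁽ⁿ⁾ > 0. -/

import Mathlib

/-- The inverse hyperbolic cosine, for arguments `x ≥ 1`. -/
noncomputable def arcosh (x : ℝ) : ℝ := Real.log (x + Real.sqrt (x ^ 2 - 1))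

lemma cosh_arcosh {x : ℝ} (hx : 1 ≤ x) : Real.cosh (arcosh x) = x := by
  have h0 : 0 ≤ x ^ 2 - 1 := by nlinarith
  have hs : Real.sqrt (x ^ 2 - 1) ^ 2 = x ^ 2 - 1 := Real.sq_sqrt h0
  have hs0 : 0 ≤ Real.sqrt (x ^ 2 - 1) := Real.sqrt_nonneg _
  have hy : 0 < x + Real.sqrt (x ^ 2 - 1) := by nlinarith
  rw [arcosh, Real.cosh_eq, Real.exp_log hy, Real.exp_neg, Real.exp_log hy]
  field_simp
  nlinarith

noncomputable def Sent (n : ℕ) (τ l : ℝ) (a b : ℤ) : ℝ :=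
  (1/τ) * (Real.sinh (((n:ℝ)+1 - ((max a b : ℤ):ℝ)) * l) * Real.sinh (((min a b : ℤ):ℝ) * l)) /
    (Real.sinh l * Real.sinh (((n:ℝ)+1)*l))

lemma Sent_bot (n : ℕ) (τ l : ℝ) (b : ℤ) (hb : 0 ≤ b) : Sent n τ l 0 b = 0 := by
  unfold Sent
  rw [min_eq_left hb]
  simp

lemma Sent_top (n : ℕ) (τ l : ℝ) (b : ℤ) (hb : b ≤ (n:ℤ)+1) : Sent n τ l ((n:ℤ)+1) b = 0 := by
  unfold Sent
  rw [max_eq_left hb]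
  push_cast
  rw [show ((n:ℝ) + 1 - ((n:ℝ)+1)) = 0 by ring]
  simp

lemma fin_sum_ite (n : ℕ) (c : ℤ) (g : Fin n → ℝ) :
    (∑ k : Fin n, if (k:ℤ) = c then g k else 0) =
      if h : 0 ≤ c ∧ c < n then g ⟨c.toNat, by omega⟩ else 0 := by
  by_cases h : 0 ≤ c ∧ c < n
  · rw [dif_pos h]
    rw [Finset.sum_eq_single (⟨c.toNat, by omega⟩ : Fin n)]
    · rw [if_pos (by simp; omega)]
    · intro k _ hk
      rw [if_neg]
      intro hkc
      apply hk
      apply Fin.ext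
      have := k.isLt
      simp at hkc ⊢
      omega
    · intro hc; exact absurd (Finset.mem_univ _) hc
  · rw [dif_neg h]
    apply Finset.sum_eq_zero
    intro k _
    rw [if_neg]
    have := k.isLt
    intro hkc
    apply h
    constructor <;> omega

lemma Sent_key (n : ℕ) (τ l : ℝ) (hτ0 : 0 < τ) (hl0 : 0 < l)
    (hc : Real.cosh l = 1/(2*τ)) (a b : ℤ) (ha1 : 1 ≤ a) (han : a ≤ n) (hb1 : 1 ≤ b) (hbn : b ≤ n) :
    Sent n τ l a b - τ * Sent n τ l (a-1) b - τ * Sent n τ l (a+1) b = if a = b then 1 else 0 := by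
  have hD1 : 0 < Real.sinh l := Real.sinh_pos_iff.2 hl0
  have hD2 : 0 < Real.sinh (((n:ℝ)+1)*l) := Real.sinh_pos_iff.2 (by positivity)
  have hc' : Real.cosh l * (2*τ) = 1 := by rw [hc]; field_simp
  rcases lt_trichotomy a b with h | h | h
  · have h1 : a + 1 ≤ b := h
    rw [if_neg (by omega)]
    unfold Sent
    rw [max_eq_right (by omega : a ≤ b), max_eq_right (by omega : a - 1 ≤ b),
        max_eq_right (by omega : a + 1 ≤ b),
        min_eq_left (by omega : a ≤ b), min_eq_left (by omega : a - 1 ≤ b),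
        min_eq_left (by omega : a + 1 ≤ b)]
    push_cast
    rw [show ((a:ℝ) - 1) * l = (a:ℝ)*l - l by ring, show ((a:ℝ) + 1) * l = (a:ℝ)*l + l by ring,
        Real.sinh_sub, Real.sinh_add]
    field_simp
    ring_nf
    linear_combination (-(Real.sinh ((n:ℝ)*l - (b:ℝ)*l + l) * Real.sinh (l*(a:ℝ)))) * hc'
  · subst h
    rw [if_pos rfl]
    unfold Sent
    rw [show max a a = a by omega, show min a a = a by omega,
        show max (a-1) a = a by omega, show min (a-1) a = a - 1 by omega,
        show max (a+1) a = a + 1 by omega, show min (a+1) a = a by omega]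
    push_cast
    rw [show ((a:ℝ) - 1) * l = (a:ℝ)*l - l by ring,
        show ((n:ℝ) + 1 - ((a:ℝ)+1)) * l = ((n:ℝ)+1-(a:ℝ))*l - l by ring,
        Real.sinh_sub, Real.sinh_sub]
    have h2 : Real.sinh (((n:ℝ)+1-(a:ℝ))*l) * Real.cosh ((a:ℝ)*l)
        + Real.cosh (((n:ℝ)+1-(a:ℝ))*l) * Real.sinh ((a:ℝ)*l) ≠ 0 := by
      rw [← Real.sinh_add, show (((n:ℝ)+1-(a:ℝ))*l + (a:ℝ)*l) = ((n:ℝ)+1)*l by ring]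
      exact hD2.ne'
    rw [show ((n:ℝ) + 1) * l = ((n:ℝ)+1-(a:ℝ))*l + (a:ℝ)*l by ring, Real.sinh_add]
    field_simp [hτ0.ne', hD1.ne', h2]
    rw [div_eq_iff (by convert h2 using 1; ring)]
    linear_combination (-(Real.sinh (((n:ℝ)+1-(a:ℝ))*l) * Real.sinh ((a:ℝ)*l))) * hc'
  · have h1 : b + 1 ≤ a := h
    rw [if_neg (by omega)]
    unfold Sent
    rw [max_eq_left (by omega : b ≤ a), max_eq_left (by omega : b ≤ a - 1),
        max_eq_left (by omega : b ≤ a + 1),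
        min_eq_right (by omega : b ≤ a), min_eq_right (by omega : b ≤ a - 1),
        min_eq_right (by omega : b ≤ a + 1)]
    push_cast
    rw [show ((n:ℝ)+1-((a:ℝ) - 1)) * l = ((n:ℝ)+1-(a:ℝ))*l + l by ring,
        show ((n:ℝ)+1-((a:ℝ) + 1)) * l = ((n:ℝ)+1-(a:ℝ))*l - l by ring,
        Real.sinh_sub, Real.sinh_add]
    field_simp
    linear_combination (-(Real.sinh (((n:ℝ)+1-(a:ℝ))*l) * Real.sinh (l*(b:ℝ)))) * hc'

theorem tridiag_inverse_diagonal (n : ℕ) (hn : 1 ≤ n) (τ l : ℝ)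
    (hτ0 : 0 < τ) (hτ : τ < 1 / 2) (hl0 : 0 < l)
    (hl : l = arcosh (1 / (2 * τ)))
    (Υ : Matrix (Fin n) (Fin n) ℝ)
    (hΥ : ∀ i j : Fin n, Υ i j =
      if i = j then 1
      else if ((i : ℤ) - (j : ℤ)).natAbs = 1 then -τ
      else 0) :
    ∀ i : Fin n,
      Υ⁻¹ i i =
        (1 / τ) * (Real.sinh (((n : ℝ) + 1 - ((i : ℝ) + 1)) * l) *
            Real.sinh (((i : ℝ) + 1) * l)) /
          (Real.sinh l * Real.sinh (((n : ℝ) + 1) * l)) ∧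
      0 < Υ⁻¹ i i := by
  have hc : Real.cosh l = 1/(2*τ) := by
    rw [hl]
    exact cosh_arcosh (by rw [le_div_iff₀ (by linarith)]; linarith)
  set S : Matrix (Fin n) (Fin n) ℝ := fun i j => Sent n τ l ((i:ℤ)+1) ((j:ℤ)+1) with hS
  have hinv : Υ * S = 1 := by
    ext i j
    have hi := i.isLt
    have hj := j.isLt
    rw [Matrix.mul_apply]
    have hdec : ∀ k : Fin n, Υ i k * S k j =
        (if (k:ℤ) = (i:ℤ) then S k j else 0)
        + ((if (k:ℤ) = (i:ℤ)-1 then -τ * S k j else 0)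
        + (if (k:ℤ) = (i:ℤ)+1 then -τ * S k j else 0)) := by
      intro k
      have hk := k.isLt
      rw [hΥ]
      rcases eq_or_ne i k with e | e
      · rw [if_pos e, if_pos (by rw [e]), if_neg (by omega), if_neg (by omega)]
        ring
      · rw [if_neg e, if_neg (show ¬((k:ℤ) = (i:ℤ)) from fun h => e (Fin.ext (by omega)))]
        by_cases h2 : ((i:ℤ) - (k:ℤ)).natAbs = 1
        · rw [if_pos h2]
          rcases (by omega : (k:ℤ) = (i:ℤ)-1 ∨ (k:ℤ) = (i:ℤ)+1) with h3 | h3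
          · rw [if_pos h3, if_neg (by omega)]; ring
          · rw [if_neg (by omega), if_pos h3]; ring
        · rw [if_neg h2, if_neg (by omega), if_neg (by omega)]; ring
    rw [Finset.sum_congr rfl fun k _ => hdec k, Finset.sum_add_distrib, Finset.sum_add_distrib,
        fin_sum_ite, fin_sum_ite, fin_sum_ite]
    have t1 : (if h : 0 ≤ (i:ℤ) ∧ (i:ℤ) < n then
        S ⟨(i:ℤ).toNat, by omega⟩ j else 0) = Sent n τ l ((i:ℤ)+1) ((j:ℤ)+1) := by
      rw [dif_pos ⟨by omega, by omega⟩]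
      show Sent n τ l ((((i:ℤ).toNat : ℕ):ℤ)+1) ((j:ℤ)+1) = _
      rw [Int.toNat_of_nonneg (by omega)]
    have t2 : (if h : 0 ≤ (i:ℤ)-1 ∧ (i:ℤ)-1 < n then
        -τ * S ⟨((i:ℤ)-1).toNat, by omega⟩ j else 0) = -τ * Sent n τ l (i:ℤ) ((j:ℤ)+1) := by
      by_cases h : 0 ≤ (i:ℤ)-1
      · rw [dif_pos ⟨h, by omega⟩]
        show -τ * Sent n τ l (((((i:ℤ)-1).toNat : ℕ):ℤ)+1) ((j:ℤ)+1) = _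
        rw [Int.toNat_of_nonneg (by omega), show (i:ℤ)-1+1 = (i:ℤ) by ring]
      · rw [dif_neg (by omega)]
        rw [show (i:ℤ) = 0 by omega, Sent_bot n τ l _ (by omega)]
        ring
    have t3 : (if h : 0 ≤ (i:ℤ)+1 ∧ (i:ℤ)+1 < n then
        -τ * S ⟨((i:ℤ)+1).toNat, by omega⟩ j else 0) = -τ * Sent n τ l ((i:ℤ)+2) ((j:ℤ)+1) := by
      by_cases h : (i:ℤ)+1 < n
      · rw [dif_pos ⟨by omega, h⟩]
        show -τ * Sent n τ l (((((i:ℤ)+1).toNat : ℕ):ℤ)+1) ((j:ℤ)+1) = _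
        rw [Int.toNat_of_nonneg (by omega), show (i:ℤ)+1+1 = (i:ℤ)+2 by ring]
      · rw [dif_neg (by omega)]
        rw [show (i:ℤ)+2 = (n:ℤ)+1 by omega, Sent_top n τ l _ (by omega)]
        ring
    rw [t1, t2, t3, Matrix.one_apply]
    have key := Sent_key n τ l hτ0 hl0 hc ((i:ℤ)+1) ((j:ℤ)+1)
      (by omega) (by omega) (by omega) (by omega)
    rw [show (i:ℤ)+1-1 = (i:ℤ) by ring, show (i:ℤ)+1+1 = (i:ℤ)+2 by ring] at key
    rcases eq_or_ne i j with e | e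
    · rw [if_pos e]
      rw [if_pos (by rw [e])] at key
      linarith [key]
    · rw [if_neg e]
      rw [if_neg (show ¬((i:ℤ)+1 = (j:ℤ)+1) from fun h => e (Fin.ext (by omega)))] at key
      linarith [key]
  have hSinv : Υ⁻¹ = S := Matrix.inv_eq_right_inv hinv
  intro i
  have hi := i.isLt
  have hdiag : Υ⁻¹ i i = Sent n τ l ((i:ℤ)+1) ((i:ℤ)+1) := by rw [hSinv]
  have hform : Sent n τ l ((i:ℤ)+1) ((i:ℤ)+1) =
      (1 / τ) * (Real.sinh (((n : ℝ) + 1 - ((i : ℝ) + 1)) * l) *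
          Real.sinh (((i : ℝ) + 1) * l)) /
        (Real.sinh l * Real.sinh (((n : ℝ) + 1) * l)) := by
    unfold Sent
    rw [max_self, min_self]
    push_cast
    ring_nf
  refine ⟨by rw [hdiag, hform], ?_⟩
  rw [hdiag, hform]
  have hi' : (i:ℝ) < n := by exact_mod_cast hi
  have h1 : 0 < Real.sinh (((n : ℝ) + 1 - ((i : ℝ) + 1)) * l) :=
    Real.sinh_pos_iff.2 (by nlinarith)
  have h2 : 0 < Real.sinh (((i : ℝ) + 1) * l) :=
    Real.sinh_pos_iff.2 (by positivity)
  have hD1 : 0 < Real.sinh l := Real.sinh_pos_iff.2 hl0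
  have hD2 : 0 < Real.sinh (((n:ℝ)+1)*l) := Real.sinh_pos_iff.2 (by positivity)
  exact div_pos (by positivity) (by positivity)
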